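/- Let U_or ≥ 1. If θ₁, θ₂ ∈ [0,1] are such that the odds ratio θ₂(1−θ₁)/(θ₁(1−θ₂)) ≤ U_or, then θ₂ − θ₁ ≤ (√U_or − 1)/(√U_or + 1); moreover this bound is attained (at θ₁ = 1/(1+√U_or), θ₂ = √U_or/(1+√U_or)). -/

import Mathlib

open Real

/-- Let `U_or ≥ 1`. If `θ₁, θ₂ ∈ [0,1]` have odds ratio at most
`U_or` (stated multiplicatively as `θ₂(1−θ₁) ≤ U_or · θ₁(1−θ₂)`), then
`θ₂ − θ₁ ≤ (√U_or − 1)/(√U_or + 1)`; moreover this bound is attained at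
`θ₁ = 1/(1+√U_or)`, `θ₂ = √U_or/(1+√U_or)`. -/
theorem oddsRatio_bound_difference (U : ℝ) (hU : 1 ≤ U) :
    (∀ θ₁ ∈ Set.Icc (0 : ℝ) 1, ∀ θ₂ ∈ Set.Icc (0 : ℝ) 1,
      θ₂ * (1 - θ₁) ≤ U * (θ₁ * (1 - θ₂)) →
      θ₂ - θ₁ ≤ (Real.sqrt U - 1) / (Real.sqrt U + 1)) ∧
    ((Real.sqrt U / (1 + Real.sqrt U)) * (1 - 1 / (1 + Real.sqrt U))
        ≤ U * ((1 / (1 + Real.sqrt U)) * (1 - Real.sqrt U / (1 + Real.sqrt U))) ∧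
      Real.sqrt U / (1 + Real.sqrt U) - 1 / (1 + Real.sqrt U)
        = (Real.sqrt U - 1) / (Real.sqrt U + 1)) := by
  set s := Real.sqrt U with hs
  have hs1 : 1 ≤ s := by
    rw [hs, show (1:ℝ) = Real.sqrt 1 by simp]
    exact Real.sqrt_le_sqrt hU
  have hs2 : s ^ 2 = U := Real.sq_sqrt (by linarith : (0:ℝ) ≤ U)
  have hsp : 0 < s + 1 := by linarith
  have hsp' : 0 < 1 + s := by linarith
  refine ⟨?_, ?_, ?_⟩
  · rintro θ₁ ⟨h10, h11⟩ θ₂ ⟨h20, h21⟩ h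
    rw [le_div_iff₀ hsp]
    have h' : θ₂ * (1 - θ₁) ≤ s ^ 2 * (θ₁ * (1 - θ₂)) := by rw [hs2]; exact h
    have hsm : (0:ℝ) ≤ (s - 1) * (θ₁ + (1 - θ₂)) :=
      mul_nonneg (by linarith) (by linarith)
    have haux : 0 < (s - 1) * (θ₁ + (1 - θ₂)) + 2 := by linarith
    by_contra hG
    push_neg at hG
    have hneg : s - 1 - (θ₂ - θ₁) * (s + 1) < 0 := by linarith
    have hprod : (s - 1 - (θ₂ - θ₁) * (s + 1)) * ((s - 1) * (θ₁ + (1 - θ₂)) + 2) < 0 :=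
      mul_neg_of_neg_of_pos hneg haux
    have hsq : (0:ℝ) ≤ (s ^ 2 - 1) * (θ₁ - (1 - θ₂)) ^ 2 :=
      mul_nonneg (by nlinarith) (sq_nonneg _)
    nlinarith [hprod, h', hsq]
  · have : s / (1 + s) * (1 - 1 / (1 + s)) = s ^ 2 / (1 + s) ^ 2 := by
      field_simp; ring
    rw [this]
    have : U * (1 / (1 + s) * (1 - s / (1 + s))) = U / (1 + s) ^ 2 := by
      field_simp
      ring
    rw [this, hs2]
  · rw [div_sub_div_same]
    ring_nf
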